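/- With notation and standing hypotheses as in the context (using (q-we), (H1), (H2), and two-out-of-three for W_C and W_D), for every object A of D the component of the augmentation at Q̄ A lies in the weak equivalences: ε_{Q̄ A} ∈ W_D, where Q̄ := G ⋙ Q ⋙ F. -/

import Mathlib

open CategoryTheory

/-- The component of the augmentation `ε` at `Q̄ A` is a weak equivalence. -/
theorem augmentation_at_coreflector_is_we {C D : Type*} [Category C] [Category D]
    {F : C ⥤ D} {G : D ⥤ C} (adj : F ⊣ G)
    (Q : C ⥤ C) (q : Q ⟶ 𝟭 C)
    (W_C : MorphismProperty C) (W_D : MorphismProperty D)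
    [W_C.HasTwoOutOfThreeProperty] [W_D.HasTwoOutOfThreeProperty]
    (hq : ∀ X : C, W_C (q.app X))
    (H1 : ∀ X : C, W_C (adj.unit.app (Q.obj X)))
    (H2 : ∀ {X Y : C} (g : Q.obj X ⟶ Q.obj Y), W_C g → W_D (F.map g))
    (A : D) :
    W_D (F.map (q.app (G.obj (F.obj (Q.obj (G.obj A))))) ≫
      adj.counit.app (F.obj (Q.obj (G.obj A)))) := by
  set X := Q.obj (G.obj A) with hX
  -- naturality of q at η_X
  have hnat : Q.map (adj.unit.app X) ≫ q.app (G.obj (F.obj X)) =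
      q.app X ≫ adj.unit.app X := q.naturality (adj.unit.app X)
  -- Q (η_X) is a weak equivalence in C
  have hQη : W_C (Q.map (adj.unit.app X)) := by
    apply W_C.of_postcomp _ (q.app (G.obj (F.obj X))) (hq _)
    rw [hnat]
    exact W_C.comp_mem _ _ (hq X) (H1 _)
  -- F (Q η_X) is a weak equivalence in D
  have hFQη : W_D (F.map (Q.map (adj.unit.app X))) := H2 _ hQη
  -- the precomposed composite equals F (q_X)
  have key : F.map (Q.map (adj.unit.app X)) ≫
      (F.map (q.app (G.obj (F.obj X))) ≫ adj.counit.app (F.obj X)) = F.map (q.app X) := by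
    rw [← Category.assoc, ← F.map_comp, hnat, F.map_comp, Category.assoc]
    simp [Adjunction.left_triangle_components]
  have hFq : W_D (F.map (q.app X)) := H2 _ (hq X)
  exact W_D.of_precomp _ _ hFQη (by rw [key]; exact hFq)
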